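/- Lemma (no repeated state in symmetric unanimity chains, Lemma 12): Suppose a symmetric protocol solves uniform bipartition with designated initial state ini_r on all complete communication graphs under global fairness, for populations of size 4. Consider the sequence of states p₀ = ini_r, p₁, p₂, ... defined by the symmetric transitions (p_i, p_i) → (p_{i+1}, p_{i+1}). Then p_i ≠ p_{i+1} for all i; i.e., no state q in this chain satisfies (q,q)→(q,q). -/
import Mathlib


/-- Colors. -/
inductive Color2 : Type
  | red | blue
deriving DecidableEq

/-- One step of a deterministic population protocol on a complete graph. -/
def Step {Q : Type} {n : ℕ} (δ : Q → Q → Q × Q) (C C' : Fin n → Q) : Prop :=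
  ∃ i j : Fin n, i ≠ j ∧
    C' = Function.update (Function.update C i (δ (C i) (C j)).1) j
          (δ (C i) (C j)).2

/-- Number of agents with color `c`. -/
def cntCol {Q : Type} {n : ℕ} (f : Q → Color2) (C : Fin n → Q) (c : Color2) : ℕ :=
  (Finset.univ.filter fun a => f (C a) = c).card

/-- Global fairness of an execution. -/
def GloballyFair {Q : Type} {n : ℕ} (δ : Q → Q → Q × Q) (e : ℕ → Fin n → Q) : Prop :=
  ∀ C C' : Fin n → Q, Step δ C C' →
    {t | e t = C}.Infinite → {t | e t = C'}.Infinite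

/-- A configuration is stable for uniform bipartition: group sizes differ by at
most one and no agent ever changes its color afterwards. -/
def StableBip {Q : Type} {n : ℕ} (δ : Q → Q → Q × Q) (f : Q → Color2)
    (C : Fin n → Q) : Prop :=
  (cntCol f C .red ≤ cntCol f C .blue + 1 ∧ cntCol f C .blue ≤ cntCol f C .red + 1) ∧
  ∀ C', Relation.ReflTransGen (Step δ) C C' → ∀ a, f (C' a) = f (C a)

/-- The protocol solves uniform bipartition on the 4-agent complete graph with
designated initial state `inir` under global fairness. -/
def Solves4 {Q : Type} (δ : Q → Q → Q × Q) (f : Q → Color2) (inir : Q) : Prop :=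
  ∀ e : ℕ → Fin 4 → Q, e 0 = (fun _ => inir) →
    (∀ t, Step δ (e t) (e (t + 1))) → GloballyFair δ e →
    ∃ t, StableBip δ f (e t)

/-- Lemma 12: in the chain of symmetric transitions from the initial state,
consecutive states are distinct (no state in the chain is a fixed point). -/
theorem stmt17 (Q : Type) (δ : Q → Q → Q × Q)
    (hsym : ∀ p q : Q, δ q p = ((δ p q).2, (δ p q).1))
    (f : Q → Color2) (inir : Q) (hsolve : Solves4 δ f inir) :
    ∀ i : ℕ, (fun q => (δ q q).1)^[i + 1] inir ≠ (fun q => (δ q q).1)^[i] inir := by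
  intro i h
  set s : Q → Q := fun q => (δ q q).1 with hs
  set q : Q := s^[i] inir with hqdef
  have hδ : ∀ p, δ p p = (s p, s p) := by
    intro p
    have h12 : (δ p p).1 = (δ p p).2 := congrArg Prod.fst (hsym p p)
    exact Prod.ext rfl h12.symm
  have hfix : s q = q := by
    have := Function.iterate_succ_apply' s i inir
    rw [hqdef, this.symm]
    exact h
  have hstay : ∀ m, i ≤ m → s^[m] inir = q := by
    intro m hm
    induction hm with
    | refl => rfl
    | step _ ih => rename_i n hn; rw [Function.iterate_succ_apply', ih, hfix]
  -- the execution
  set e : ℕ → Fin 4 → Q := fun t a => s^[if a.val < 2 then (t+1)/2 else t/2] inir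
    with he
  have he0 : e 0 = fun _ => inir := by
    funext a; simp only [he]; split <;> rfl
  have hval : ∀ t a, e t a = s^[if a.val < 2 then (t+1)/2 else t/2] inir := by
    intro t a; rw [he]
  have hstep : ∀ t, Step δ (e t) (e (t + 1)) := by
    intro t
    rcases Nat.even_or_odd t with ⟨k, hk⟩ | ⟨k, hk⟩
    · refine ⟨0, 1, by decide, ?_⟩
      have E0 : e t 0 = s^[k] inir := by
        show s^[(t+1)/2] inir = _
        rw [show (t+1)/2 = k by omega]
      have E1 : e t 1 = s^[k] inir := by
        show s^[(t+1)/2] inir = _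
        rw [show (t+1)/2 = k by omega]
      have hD : δ (e t 0) (e t 1) = (s^[k+1] inir, s^[k+1] inir) := by
        rw [E0, E1, hδ, Function.iterate_succ_apply']
      rw [hD]
      funext a
      fin_cases a
      · rw [show ((⟨0, by omega⟩ : Fin 4)) = (0 : Fin 4) from rfl,
            Function.update_of_ne (by decide), Function.update_self]
        show s^[(t+1+1)/2] inir = _
        rw [show (t+1+1)/2 = k+1 by omega]
      · rw [show ((⟨1, by omega⟩ : Fin 4)) = (1 : Fin 4) from rfl,
            Function.update_self]
        show s^[(t+1+1)/2] inir = _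
        rw [show (t+1+1)/2 = k+1 by omega]
      · rw [show ((⟨2, by omega⟩ : Fin 4)) = (2 : Fin 4) from rfl,
            Function.update_of_ne (by decide), Function.update_of_ne (by decide)]
        show s^[(t+1)/2] inir = s^[t/2] inir
        rw [show (t+1)/2 = k by omega, show t/2 = k by omega]
      · rw [show ((⟨3, by omega⟩ : Fin 4)) = (3 : Fin 4) from rfl,
            Function.update_of_ne (by decide), Function.update_of_ne (by decide)]
        show s^[(t+1)/2] inir = s^[t/2] inir
        rw [show (t+1)/2 = k by omega, show t/2 = k by omega]
    · refine ⟨2, 3, by decide, ?_⟩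
      have E2 : e t 2 = s^[k] inir := by
        show s^[t/2] inir = _
        rw [show t/2 = k by omega]
      have E3 : e t 3 = s^[k] inir := by
        show s^[t/2] inir = _
        rw [show t/2 = k by omega]
      have hD : δ (e t 2) (e t 3) = (s^[k+1] inir, s^[k+1] inir) := by
        rw [E2, E3, hδ, Function.iterate_succ_apply']
      rw [hD]
      funext a
      fin_cases a
      · rw [show ((⟨0, by omega⟩ : Fin 4)) = (0 : Fin 4) from rfl,
            Function.update_of_ne (by decide), Function.update_of_ne (by decide)]
        show s^[(t+1+1)/2] inir = s^[(t+1)/2] inir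
        rw [show (t+1+1)/2 = k+1 by omega, show (t+1)/2 = k+1 by omega]
      · rw [show ((⟨1, by omega⟩ : Fin 4)) = (1 : Fin 4) from rfl,
            Function.update_of_ne (by decide), Function.update_of_ne (by decide)]
        show s^[(t+1+1)/2] inir = s^[(t+1)/2] inir
        rw [show (t+1+1)/2 = k+1 by omega, show (t+1)/2 = k+1 by omega]
      · rw [show ((⟨2, by omega⟩ : Fin 4)) = (2 : Fin 4) from rfl,
            Function.update_of_ne (by decide), Function.update_self]
        show s^[(t+1)/2] inir = _
        rw [show (t+1)/2 = k+1 by omega]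
      · rw [show ((⟨3, by omega⟩ : Fin 4)) = (3 : Fin 4) from rfl,
            Function.update_self]
        show s^[(t+1)/2] inir = _
        rw [show (t+1)/2 = k+1 by omega]
  have hallq : ∀ t, 2 * i ≤ t → e t = fun _ => q := by
    intro t ht
    funext a
    rw [hval]
    split <;> exact hstay _ (by omega)
  have hfair : GloballyFair δ e := by
    intro C C' hstepC hinf
    obtain ⟨t, htC, hti⟩ := hinf.exists_gt (2 * i)
    have hC : C = fun _ => q := by
      rw [← htC]; exact hallq t (by omega)
    obtain ⟨a, b, hab, hC'⟩ := hstepC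
    have hC'eq : C' = C := by
      rw [hC'] at *
      subst hC
      funext x
      simp only [Function.update_apply, hδ, hfix]
      split_ifs <;> rfl
    rw [hC'eq]
    exact hinf
  obtain ⟨t, hstab⟩ := hsolve e he0 hstep hfair
  have hreach : ∀ n, Relation.ReflTransGen (Step δ) (e t) (e (t + n)) := by
    intro n
    induction n with
    | zero => exact .refl
    | succ n ih => exact ih.tail (hstep (t + n))
  have hq2 : e (t + 2 * i) = fun _ => q := hallq _ (by omega)
  have hcol : ∀ a, f (e t a) = f q := by
    intro a
    have := hstab.2 (e (t + 2 * i)) (hreach (2 * i)) a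
    rw [hq2] at this
    exact this.symm
  have h4 : cntCol f (e t) (f q) = 4 := by
    unfold cntCol
    rw [Finset.filter_true_of_mem (fun a _ => hcol a)]
    simp
  have h0' : ∀ c, c ≠ f q → cntCol f (e t) c = 0 := by
    intro c hc
    unfold cntCol
    rw [Finset.filter_false_of_mem (fun a _ => by rw [hcol a]; exact fun hh => hc hh.symm)]
    rfl
  obtain ⟨hle1, hle2⟩ := hstab.1
  cases hfq : f q with
  | red =>
    rw [hfq] at h4
    have := h0' Color2.blue (by rw [hfq]; intro hh; cases hh)
    omega
  | blue =>
    rw [hfq] at h4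
    have := h0' Color2.red (by rw [hfq]; intro hh; cases hh)
    omega
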